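/- The function h₃(x) = (x - sin(x)·cos(x)) / (x·sin²(x)) is strictly increasing on (0, π). -/

import Mathlib

open Real

lemma Gderiv_pos (x : ℝ) (hx : 0 < x) (hx2 : x < π/2) :
    0 < 1/Real.cos x^2 + (1*Real.cos x^2 - x*(2*Real.cos x^1*(-Real.sin x)))/(Real.cos x^2)^2
      + 2*(Real.cos x*Real.cos x + Real.sin x*(-Real.sin x)) - 4 := by
  have hc : 0 < Real.cos x := Real.cos_pos_of_mem_Ioo ⟨by linarith [Real.pi_pos], hx2⟩
  have hs : 0 < Real.sin x := Real.sin_pos_of_pos_of_lt_pi hx (by linarith [Real.pi_pos])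
  have hsx : Real.sin x < x := Real.sin_lt hx
  have pyth := Real.sin_sq_add_cos_sq x
  have hc1 : Real.cos x < 1 := by nlinarith
  have key : 0 < 2*Real.cos x + 2*x*Real.sin x + 4*Real.cos x^5 - 6*Real.cos x^3 := by
    have h1 : Real.sin x ^ 2 < x * Real.sin x := by nlinarith
    have h2 := mul_pos (pow_pos (show (0:ℝ) < 1 - Real.cos x by linarith) 2)
      (show (0:ℝ) < 2*Real.cos x^3 + 4*Real.cos x^2 + 3*Real.cos x + 1 by positivity)
    nlinarith
  have h3 : 0 < Real.cos x ^ 3 := by positivity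
  have expand : 1/Real.cos x^2 + (1*Real.cos x^2 - x*(2*Real.cos x^1*(-Real.sin x)))/(Real.cos x^2)^2
      + 2*(Real.cos x*Real.cos x + Real.sin x*(-Real.sin x)) - 4
      = (2*Real.cos x + 2*x*Real.sin x + 4*Real.cos x^5 - 6*Real.cos x^3)/Real.cos x^3
        + 2*(Real.cos x^2 + Real.sin x^2 - 1) := by
    field_simp
    linear_combination (-(4*Real.cos x^3)) * pyth
  rw [expand]
  have h4 : Real.cos x^2 + Real.sin x^2 - 1 = 0 := by linarith
  have := div_pos key h3
  linarith [div_pos key h3]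

noncomputable def Gfun (x : ℝ) : ℝ :=
  Real.tan x + x / Real.cos x^2 + 2*(Real.sin x*Real.cos x) - 4*x

lemma G_hasDerivAt (x : ℝ) (hc : Real.cos x ≠ 0) :
    HasDerivAt Gfun (1/Real.cos x^2 + (1*Real.cos x^2 - x*(2*Real.cos x^1*(-Real.sin x)))/(Real.cos x^2)^2
      + 2*(Real.cos x*Real.cos x + Real.sin x*(-Real.sin x)) - 4) x := by
  have t1 := Real.hasDerivAt_tan hc
  have t2 := (hasDerivAt_id x).div ((Real.hasDerivAt_cos x).pow 2) (pow_ne_zero 2 hc)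
  have t3 := ((Real.hasDerivAt_sin x).mul (Real.hasDerivAt_cos x)).const_mul (2:ℝ)
  have t4 := (hasDerivAt_id x).const_mul (4:ℝ)
  have := ((t1.add t2).add t3).sub t4
  refine this.congr_deriv ?_
  simp only [id, Pi.pow_apply]
  push_cast
  ring

lemma cos_pos_of_Ico {x : ℝ} (hx : x ∈ Set.Ico 0 (π/2)) : 0 < Real.cos x :=
  Real.cos_pos_of_mem_Ioo ⟨by linarith [Real.pi_pos, hx.1], hx.2⟩

lemma G_contOn : ContinuousOn Gfun (Set.Ico 0 (π/2)) := by
  intro x hx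
  have hc : Real.cos x ≠ 0 := (cos_pos_of_Ico hx).ne'
  apply ContinuousAt.continuousWithinAt
  exact ((((Real.continuousAt_tan.mpr hc).add
    (continuousAt_id.div ((Real.continuous_cos.continuousAt).pow 2) (pow_ne_zero 2 hc))).add
    (continuousAt_const.mul (Real.continuous_sin.continuousAt.mul Real.continuous_cos.continuousAt))).sub
    ((continuous_const.mul continuous_id).continuousAt))

lemma G_mono : StrictMonoOn Gfun (Set.Ico 0 (π/2)) := by
  apply strictMonoOn_of_deriv_pos (convex_Ico _ _) G_contOn
  rw [interior_Ico]
  intro x hx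
  have hc : Real.cos x ≠ 0 :=
    (Real.cos_pos_of_mem_Ioo ⟨by linarith [Real.pi_pos, hx.1], hx.2⟩).ne'
  rw [(G_hasDerivAt x hc).deriv]
  exact Gderiv_pos x hx.1 hx.2

lemma G_pos {x : ℝ} (hx : 0 < x) (hx2 : x < π/2) : 0 < Gfun x := by
  have h0 : Gfun 0 = 0 := by simp [Gfun]
  have := G_mono (Set.mem_Ico.mpr ⟨le_refl 0, by linarith [Real.pi_pos]⟩)
    (Set.mem_Ico.mpr ⟨hx.le, hx2⟩) hx
  rwa [h0] at this

noncomputable def Ffun (x : ℝ) : ℝ := x * Real.tan x + Real.sin x^2 - 2*x^2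

lemma F_hasDerivAt (x : ℝ) (hc : Real.cos x ≠ 0) : HasDerivAt Ffun (Gfun x) x := by
  have t1 := (hasDerivAt_id x).mul (Real.hasDerivAt_tan hc)
  have t2 := (Real.hasDerivAt_sin x).pow 2
  have t3 := ((hasDerivAt_pow 2 x)).const_mul (2:ℝ)
  have h := (t1.add t2).sub t3
  refine h.congr_deriv ?_
  simp only [Gfun, id]
  push_cast
  rw [Real.tan_eq_sin_div_cos]
  field_simp
  ring

lemma F_contOn : ContinuousOn Ffun (Set.Ico 0 (π/2)) := by
  intro x hx
  have hc : Real.cos x ≠ 0 := (cos_pos_of_Ico hx).ne'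
  apply ContinuousAt.continuousWithinAt
  exact ((continuousAt_id.mul (Real.continuousAt_tan.mpr hc)).add
    ((Real.continuous_sin.continuousAt).pow 2)).sub
    ((continuous_const.mul (continuous_pow 2)).continuousAt)

lemma F_pos {x : ℝ} (hx : 0 < x) (hx2 : x < π/2) : 0 < Ffun x := by
  have hmono : StrictMonoOn Ffun (Set.Ico 0 (π/2)) := by
    apply strictMonoOn_of_deriv_pos (convex_Ico _ _) F_contOn
    rw [interior_Ico]
    intro y hy
    have hc : Real.cos y ≠ 0 :=
      (Real.cos_pos_of_mem_Ioo ⟨by linarith [Real.pi_pos, hy.1], hy.2⟩).ne'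
    rw [(F_hasDerivAt y hc).deriv]
    exact G_pos hy.1 hy.2
  have h0 : Ffun 0 = 0 := by simp [Ffun]
  have := hmono (Set.mem_Ico.mpr ⟨le_refl 0, by linarith [Real.pi_pos]⟩)
    (Set.mem_Ico.mpr ⟨hx.le, hx2⟩) hx
  rwa [h0] at this

lemma Q_pos {x : ℝ} (hx : 0 < x) (hx2 : x < π) :
    0 < x * Real.sin x + Real.sin x^2 * Real.cos x - 2*x^2 * Real.cos x := by
  have hs : 0 < Real.sin x := Real.sin_pos_of_pos_of_lt_pi hx hx2
  rcases lt_or_ge x (π/2) with h | h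
  · have hc : 0 < Real.cos x := Real.cos_pos_of_mem_Ioo ⟨by linarith [Real.pi_pos], h⟩
    have hF := F_pos hx h
    have := mul_pos hF hc
    simp only [Ffun] at this
    rw [Real.tan_eq_sin_div_cos] at this
    have heq : (x * (Real.sin x / Real.cos x) + Real.sin x^2 - 2*x^2) * Real.cos x
        = x * Real.sin x + Real.sin x^2 * Real.cos x - 2*x^2 * Real.cos x := by
      field_simp
    linarith [heq ▸ this]
  · have hc : Real.cos x ≤ 0 := Real.cos_nonpos_of_pi_div_two_le_of_le h (by linarith [Real.pi_pos])
    have hs1 : Real.sin x ≤ 1 := Real.sin_le_one x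
    have hpi : 2 < π := by linarith [Real.pi_gt_three]
    have h2' : (0:ℝ) ≤ 2*x^2 - Real.sin x^2 := by nlinarith
    nlinarith [mul_pos hx hs, mul_nonneg (neg_nonneg.2 hc) h2']

theorem h3_strictMonoOn :
    StrictMonoOn (fun x : ℝ => (x - Real.sin x * Real.cos x) / (x * Real.sin x ^ 2))
      (Set.Ioo 0 Real.pi) := by
  apply strictMonoOn_of_deriv_pos (convex_Ioo _ _)
  · apply ContinuousOn.div
    · fun_prop
    · fun_prop
    · intro x hx
      have hs := Real.sin_pos_of_pos_of_lt_pi hx.1 hx.2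
      have hx0 := hx.1
      positivity
  · rw [interior_Ioo]
    intro x hx
    have hs : 0 < Real.sin x := Real.sin_pos_of_pos_of_lt_pi hx.1 hx.2
    have hx0 : 0 < x := hx.1
    have hD : x * Real.sin x ^ 2 ≠ 0 := by positivity
    have t1 : HasDerivAt (fun y : ℝ => y - Real.sin y * Real.cos y)
        (1 - (Real.cos x * Real.cos x + Real.sin x * (-Real.sin x))) x :=
      (hasDerivAt_id x).sub ((Real.hasDerivAt_sin x).mul (Real.hasDerivAt_cos x))
    have t2 : HasDerivAt (fun y : ℝ => y * Real.sin y ^ 2)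
        (1 * Real.sin x ^ 2 + x * ((2:ℕ) * Real.sin x ^ 1 * Real.cos x)) x :=
      (hasDerivAt_id x).mul ((Real.hasDerivAt_sin x).pow 2)
    have h := t1.div t2 hD
    rw [show deriv (fun x : ℝ => (x - Real.sin x * Real.cos x) / (x * Real.sin x ^ 2)) x = _ from h.deriv]
    apply div_pos
    · have pyth := Real.sin_sq_add_cos_sq x
      have hnum : (1 - (Real.cos x * Real.cos x + Real.sin x * (-Real.sin x))) * (x * Real.sin x ^ 2)
          - (x - Real.sin x * Real.cos x) * (1 * Real.sin x ^ 2 + x * ((2:ℕ) * Real.sin x ^ 1 * Real.cos x))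
          = Real.sin x * (x * Real.sin x + Real.sin x ^ 2 * Real.cos x - 2 * x ^ 2 * Real.cos x) := by
        push_cast
        linear_combination (x * Real.sin x ^ 2) * pyth
      rw [hnum]
      exact mul_pos hs (Q_pos hx.1 hx.2)
    · positivity
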